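/- Suppose U is twice continuously differentiable. Then the attracting numerical step Φ⁻_ε is differentiable, and its Jacobian J = D Φ⁻_ε(z) at every z ∈ ℝᵈ × ℝᵈ satisfies the conformal-symplectic identity Jᵀ Ω⁻¹ J = e^{−γ ε} Ω⁻¹, where Ω⁻¹ is the 2d×2d block matrix [[0, −I_d],[I_d, 0]]. -/

import Mathlib

open Matrix

noncomputable section

/-- Action of a matrix on a vector in Euclidean space. -/
def mvec {d : ℕ} (A : Matrix (Fin d) (Fin d) ℝ) (p : EuclideanSpace ℝ (Fin d)) :
    EuclideanSpace ℝ (Fin d) :=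
  WithLp.toLp 2 (A.mulVec p)

/-- The leapfrog step `P_ε` with potential `U` and inverse mass matrix `Sinv = Σ⁻¹`. -/
def leapfrog {d : ℕ} (U : EuclideanSpace ℝ (Fin d) → ℝ) (Sinv : Matrix (Fin d) (Fin d) ℝ)
    (ε : ℝ) (z : EuclideanSpace ℝ (Fin d) × EuclideanSpace ℝ (Fin d)) :
    EuclideanSpace ℝ (Fin d) × EuclideanSpace ℝ (Fin d) :=
  let phalf := z.2 - (ε / 2) • gradient U z.1
  let q' := z.1 + ε • mvec Sinv phalf
  (q', phalf - (ε / 2) • gradient U q')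

/-- The momentum-rescaling map `ξ_t(q, p) = (q, e^{γ t} p)`. -/
def xi {d : ℕ} (γ t : ℝ) (z : EuclideanSpace ℝ (Fin d) × EuclideanSpace ℝ (Fin d)) :
    EuclideanSpace ℝ (Fin d) × EuclideanSpace ℝ (Fin d) :=
  (z.1, Real.exp (γ * t) • z.2)

/-- The repelling numerical step `Φ⁺_ε = ξ_{ε/2} ∘ P_ε ∘ ξ_{ε/2}`. -/
def stepPlus {d : ℕ} (U : EuclideanSpace ℝ (Fin d) → ℝ) (Sinv : Matrix (Fin d) (Fin d) ℝ)
    (γ ε : ℝ) :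
    EuclideanSpace ℝ (Fin d) × EuclideanSpace ℝ (Fin d) →
      EuclideanSpace ℝ (Fin d) × EuclideanSpace ℝ (Fin d) :=
  xi γ (ε / 2) ∘ leapfrog U Sinv ε ∘ xi γ (ε / 2)

/-- The attracting numerical step `Φ⁻_ε = ξ_{−ε/2} ∘ P_ε ∘ ξ_{−ε/2}`. -/
def stepMinus {d : ℕ} (U : EuclideanSpace ℝ (Fin d) → ℝ) (Sinv : Matrix (Fin d) (Fin d) ℝ)
    (γ ε : ℝ) :
    EuclideanSpace ℝ (Fin d) × EuclideanSpace ℝ (Fin d) →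
      EuclideanSpace ℝ (Fin d) × EuclideanSpace ℝ (Fin d) :=
  xi γ (-(ε / 2)) ∘ leapfrog U Sinv ε ∘ xi γ (-(ε / 2))


/-- The product basis of the standard bases on `ℝᵈ × ℝᵈ`, indexed by `Fin d ⊕ Fin d`. -/
def phaseBasis (d : ℕ) :
    Module.Basis (Fin d ⊕ Fin d) ℝ (EuclideanSpace ℝ (Fin d) × EuclideanSpace ℝ (Fin d)) :=
  (PiLp.basisFun 2 ℝ (Fin d)).prod (PiLp.basisFun 2 ℝ (Fin d))

/-- The Jacobian matrix of a map on phase space at a point, in the standard basis. -/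
def Jmat {d : ℕ}
    (Φ : EuclideanSpace ℝ (Fin d) × EuclideanSpace ℝ (Fin d) →
      EuclideanSpace ℝ (Fin d) × EuclideanSpace ℝ (Fin d))
    (z : EuclideanSpace ℝ (Fin d) × EuclideanSpace ℝ (Fin d)) :
    Matrix (Fin d ⊕ Fin d) (Fin d ⊕ Fin d) ℝ :=
  LinearMap.toMatrix (phaseBasis d) (phaseBasis d) (fderiv ℝ Φ z).toLinearMap

/-- The block matrix `Ω⁻¹ = [[0, −I_d], [I_d, 0]]`. -/
def Ωinv (d : ℕ) : Matrix (Fin d ⊕ Fin d) (Fin d ⊕ Fin d) ℝ :=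
  Matrix.fromBlocks 0 (-1) 1 0

open InnerProductSpace

section Aux

variable {d : ℕ}

lemma mvec_symm (A : Matrix (Fin d) (Fin d) ℝ) (hA : A.IsSymm) (u v : EuclideanSpace ℝ (Fin d)) :
    inner ℝ (mvec A u) v = inner ℝ u (mvec A v) := by
  simp only [PiLp.inner_apply, RCLike.inner_apply, starRingEnd_apply, star_trivial]
  calc ∑ i, v i * mvec A u i = (A.mulVec u) ⬝ᵥ v := by
        unfold dotProduct; exact Finset.sum_congr rfl fun i _ => mul_comm _ _
    _ = u ⬝ᵥ A.mulVec v := by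
        rw [Matrix.dotProduct_mulVec, ← Matrix.mulVec_transpose, hA.eq]
    _ = ∑ i, mvec A v i * u i := by
        unfold dotProduct; exact Finset.sum_congr rfl fun i _ => mul_comm _ _

/-- `toDual.symm` as a genuine `ℝ`-continuous-linear map. -/
def dualIso (d : ℕ) :
    StrongDual ℝ (EuclideanSpace ℝ (Fin d)) →L[ℝ] EuclideanSpace ℝ (Fin d) :=
  LinearMap.toContinuousLinearMap
    { toFun := fun l => (toDual ℝ (EuclideanSpace ℝ (Fin d))).symm l
      map_add' := fun x y => by simp
      map_smul' := fun c x => by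
        simp [LinearIsometryEquiv.map_smulₛₗ, starRingEnd_apply, star_trivial] }

lemma dualIso_inner (l : StrongDual ℝ (EuclideanSpace ℝ (Fin d)))
    (v : EuclideanSpace ℝ (Fin d)) : inner ℝ (dualIso d l) v = l v :=
  toDual_symm_apply

lemma grad_eq (U : EuclideanSpace ℝ (Fin d) → ℝ) :
    gradient U = fun x => dualIso d (fderiv ℝ U x) := rfl

lemma grad_hasFDerivAt (U : EuclideanSpace ℝ (Fin d) → ℝ) (hU : ContDiff ℝ 2 U)
    (q : EuclideanSpace ℝ (Fin d)) :
    HasFDerivAt (gradient U) (dualIso d ∘L fderiv ℝ (fderiv ℝ U) q) q := by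
  rw [grad_eq]
  have h1 : Differentiable ℝ (fderiv ℝ U) :=
    (hU.fderiv_right (m := 1) (by norm_num)).differentiable (by norm_num)
  exact (dualIso d).hasFDerivAt.comp q (h1 q).hasFDerivAt

lemma hess_symm (U : EuclideanSpace ℝ (Fin d) → ℝ) (hU : ContDiff ℝ 2 U)
    (q u v : EuclideanSpace ℝ (Fin d)) :
    inner ℝ ((dualIso d ∘L fderiv ℝ (fderiv ℝ U) q) u) v
      = inner ℝ u ((dualIso d ∘L fderiv ℝ (fderiv ℝ U) q) v) := by
  have hsymm : IsSymmSndFDerivAt ℝ U q := (hU.contDiffAt).isSymmSndFDerivAt (by norm_num)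
  simp only [ContinuousLinearMap.coe_comp', Function.comp_apply]
  rw [dualIso_inner, real_inner_comm, dualIso_inner]
  exact hsymm u v

abbrev PS (d : ℕ) := EuclideanSpace ℝ (Fin d) × EuclideanSpace ℝ (Fin d)

/-- The symplectic form as a bilinear map. -/
def omL (d : ℕ) : PS d →ₗ[ℝ] PS d →ₗ[ℝ] ℝ :=
  LinearMap.mk₂ ℝ (fun u v => inner ℝ u.2 v.1 - inner ℝ u.1 v.2)
    (fun u u' v => by
      simp only [Prod.fst_add, Prod.snd_add, inner_add_left]; ring)
    (fun c u v => by
      simp only [Prod.smul_fst, Prod.smul_snd, real_inner_smul_left, smul_eq_mul]; ring)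
    (fun u v v' => by
      simp only [Prod.fst_add, Prod.snd_add, inner_add_right]; ring)
    (fun c u v => by
      simp only [Prod.smul_fst, Prod.smul_snd, real_inner_smul_right, smul_eq_mul]; ring)

lemma omL_apply (u v : PS d) :
    omL d u v = inner ℝ u.2 v.1 - inner ℝ u.1 v.2 := rfl

lemma toMatrix₂_omL : LinearMap.toMatrix₂ (phaseBasis d) (phaseBasis d) (omL d) = Ωinv d := by
  ext i j
  rw [LinearMap.toMatrix₂_apply]
  rcases i with i | i <;> rcases j with j | j <;>
    simp [omL_apply, phaseBasis, Ωinv, Module.Basis.prod_apply_inl_fst, Module.Basis.prod_apply_inl_snd,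
      Module.Basis.prod_apply_inr_fst, Module.Basis.prod_apply_inr_snd, PiLp.basisFun_apply,
      EuclideanSpace.inner_single_left, EuclideanSpace.single_apply, Matrix.one_apply,
      eq_comm]

open ContinuousLinearMap in
/-- `mulVec` as a continuous linear map on Euclidean space. -/
def mvecCLM (A : Matrix (Fin d) (Fin d) ℝ) :
    EuclideanSpace ℝ (Fin d) →L[ℝ] EuclideanSpace ℝ (Fin d) :=
  LinearMap.toContinuousLinearMap
    { toFun := fun p => mvec A p
      map_add' := fun x y => by simp [mvec, Matrix.mulVec_add]
      map_smul' := fun c x => by simp [mvec, Matrix.mulVec_smul] }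

lemma mvecCLM_apply (A : Matrix (Fin d) (Fin d) ℝ) (p : EuclideanSpace ℝ (Fin d)) :
    mvecCLM A p = mvec A p := rfl

open ContinuousLinearMap

/-- A kick-and-scale stage derivative `(q,p) ↦ (q, a•p - c•H q)` as a CLM. -/
def D1 (a c : ℝ) (H : EuclideanSpace ℝ (Fin d) →L[ℝ] EuclideanSpace ℝ (Fin d)) :
    PS d →L[ℝ] PS d :=
  (fst ℝ _ _).prod (a • snd ℝ _ _ - c • (H ∘L fst ℝ _ _))

/-- The drift stage derivative: `(q,p) ↦ (q + e•M p, p)`. -/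
def D2 (e : ℝ) (M : Matrix (Fin d) (Fin d) ℝ) : PS d →L[ℝ] PS d :=
  (fst ℝ _ _ + e • (mvecCLM M ∘L snd ℝ _ _)).prod (snd ℝ _ _)

/-- Scale-and-kick stage derivative: `(q,p) ↦ (q, a•(p - c•H q))`. -/
def D3 (a c : ℝ) (H : EuclideanSpace ℝ (Fin d) →L[ℝ] EuclideanSpace ℝ (Fin d)) :
    PS d →L[ℝ] PS d :=
  (fst ℝ _ _).prod (a • (snd ℝ _ _ - c • (H ∘L fst ℝ _ _)))

lemma D1_apply (a c : ℝ) (H : EuclideanSpace ℝ (Fin d) →L[ℝ] EuclideanSpace ℝ (Fin d))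
    (u : PS d) : D1 a c H u = (u.1, a • u.2 - c • H u.1) := rfl

lemma D2_apply (e : ℝ) (M : Matrix (Fin d) (Fin d) ℝ) (u : PS d) :
    D2 e M u = (u.1 + e • mvec M u.2, u.2) := rfl

lemma D3_apply (a c : ℝ) (H : EuclideanSpace ℝ (Fin d) →L[ℝ] EuclideanSpace ℝ (Fin d))
    (u : PS d) : D3 a c H u = (u.1, a • (u.2 - c • H u.1)) := rfl

lemma om_D1 (a c : ℝ) (H : EuclideanSpace ℝ (Fin d) →L[ℝ] EuclideanSpace ℝ (Fin d))
    (hH : ∀ x y, inner ℝ (H x) y = inner ℝ x (H y)) (u v : PS d) :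
    omL d (D1 a c H u) (D1 a c H v) = a * omL d u v := by
  simp only [D1_apply, omL_apply, inner_sub_left, inner_sub_right,
    real_inner_smul_left, real_inner_smul_right]
  rw [hH u.1 v.1]; ring

lemma om_D3 (a c : ℝ) (H : EuclideanSpace ℝ (Fin d) →L[ℝ] EuclideanSpace ℝ (Fin d))
    (hH : ∀ x y, inner ℝ (H x) y = inner ℝ x (H y)) (u v : PS d) :
    omL d (D3 a c H u) (D3 a c H v) = a * omL d u v := by
  simp only [D3_apply, omL_apply, inner_sub_left, inner_sub_right,
    real_inner_smul_left, real_inner_smul_right]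
  rw [hH u.1 v.1]; ring

lemma om_D2 (e : ℝ) (M : Matrix (Fin d) (Fin d) ℝ) (hM : M.IsSymm) (u v : PS d) :
    omL d (D2 e M u) (D2 e M v) = omL d u v := by
  simp only [D2_apply, omL_apply, inner_add_left, inner_add_right,
    real_inner_smul_left, real_inner_smul_right]
  rw [mvec_symm M hM u.2 v.2]; ring

end Aux

section Main

variable {d : ℕ} (U : EuclideanSpace ℝ (Fin d) → ℝ) (Sinv : Matrix (Fin d) (Fin d) ℝ)
  (γ ε : ℝ)

/-- The Hessian of `U` at `q` as a continuous linear map. -/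
def hessCLM (q : EuclideanSpace ℝ (Fin d)) :
    EuclideanSpace ℝ (Fin d) →L[ℝ] EuclideanSpace ℝ (Fin d) :=
  dualIso d ∘L fderiv ℝ (fderiv ℝ U) q

def stage1 (z : PS d) : PS d :=
  (z.1, Real.exp (γ * (-(ε / 2))) • z.2 - (ε / 2) • gradient U z.1)

def stage3 (z : PS d) : PS d :=
  (z.1, Real.exp (γ * (-(ε / 2))) • (z.2 - (ε / 2) • gradient U z.1))

lemma stepMinus_decomp :
    stepMinus U Sinv γ ε = stage3 U γ ε ∘ ⇑(D2 ε Sinv) ∘ stage1 U γ ε := by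
  funext z
  simp only [stepMinus, leapfrog, xi, stage1, stage3, Function.comp_apply, D2_apply]

/-- Full derivative of `stepMinus` at `z`. -/
def Ltot (z : PS d) : PS d →L[ℝ] PS d :=
  D3 (Real.exp (γ * (-(ε / 2)))) (ε / 2) (hessCLM U ((D2 ε Sinv) (stage1 U γ ε z)).1) ∘L
    D2 ε Sinv ∘L
      D1 (Real.exp (γ * (-(ε / 2)))) (ε / 2) (hessCLM U z.1)

lemma stage1_hasFDerivAt (hU : ContDiff ℝ 2 U) (z : PS d) :
    HasFDerivAt (stage1 U γ ε)
      (D1 (Real.exp (γ * (-(ε / 2)))) (ε / 2) (hessCLM U z.1)) z := by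
  apply HasFDerivAt.prodMk (hasFDerivAt_fst (p := z))
  exact ((hasFDerivAt_snd (p := z)).const_smul (Real.exp (γ * (-(ε / 2))))).sub
    (((grad_hasFDerivAt U hU z.1).comp z (hasFDerivAt_fst (p := z))).const_smul (ε / 2))

lemma stage3_hasFDerivAt (hU : ContDiff ℝ 2 U) (z : PS d) :
    HasFDerivAt (stage3 U γ ε)
      (D3 (Real.exp (γ * (-(ε / 2)))) (ε / 2) (hessCLM U z.1)) z := by
  apply HasFDerivAt.prodMk (hasFDerivAt_fst (p := z))
  exact (((hasFDerivAt_snd (p := z)).sub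
    (((grad_hasFDerivAt U hU z.1).comp z
      (hasFDerivAt_fst (p := z))).const_smul (ε / 2)))).const_smul (Real.exp (γ * (-(ε / 2))))

lemma stepMinus_hasFDerivAt (hU : ContDiff ℝ 2 U) (z : PS d) :
    HasFDerivAt (stepMinus U Sinv γ ε) (Ltot U Sinv γ ε z) z := by
  rw [stepMinus_decomp]
  exact (stage3_hasFDerivAt U γ ε hU _).comp z
    (((D2 ε Sinv).hasFDerivAt).comp z (stage1_hasFDerivAt U γ ε hU z))

lemma om_Ltot (hU : ContDiff ℝ 2 U) (hS : Sinv.IsSymm) (z u v : PS d) :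
    omL d (Ltot U Sinv γ ε z u) (Ltot U Sinv γ ε z v)
      = Real.exp (-(γ * ε)) * omL d u v := by
  have hsym : ∀ q : EuclideanSpace ℝ (Fin d), ∀ x y,
      inner ℝ (hessCLM U q x) y = inner ℝ x (hessCLM U q y) := fun q => hess_symm U hU q
  simp only [Ltot, ContinuousLinearMap.coe_comp', Function.comp_apply]
  rw [om_D3 _ _ _ (hsym _), om_D2 _ _ hS, om_D1 _ _ _ (hsym _), ← mul_assoc, ← Real.exp_add]
  ring_nf

end Main

/-- For `U` twice continuously differentiable, the attracting numerical
step `Φ⁻_ε` is differentiable and its Jacobian `J = DΦ⁻_ε(z)` satisfies the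
conformal-symplectic identity `Jᵀ Ω⁻¹ J = e^{−γ ε} Ω⁻¹` at every `z`. -/
theorem stepMinus_conformally_symplectic
    (d : ℕ) (hd : 1 ≤ d) (ε : ℝ) (hε : 0 < ε) (γ : ℝ) (hγ : 0 < γ)
    (U : EuclideanSpace ℝ (Fin d) → ℝ) (hU : ContDiff ℝ 2 U)
    (S : Matrix (Fin d) (Fin d) ℝ) (hSsymm : S.IsSymm) (hSpd : S.PosDef) :
    Differentiable ℝ (stepMinus U S⁻¹ γ ε) ∧
      ∀ z : EuclideanSpace ℝ (Fin d) × EuclideanSpace ℝ (Fin d),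
        (Jmat (stepMinus U S⁻¹ γ ε) z)ᵀ * Ωinv d * Jmat (stepMinus U S⁻¹ γ ε) z =
          Real.exp (-(γ * ε)) • Ωinv d := by
  refine ⟨fun z => (stepMinus_hasFDerivAt U S⁻¹ γ ε hU z).differentiableAt, fun z => ?_⟩
  have hSinv : (S⁻¹).IsSymm := by
    rw [Matrix.IsSymm, Matrix.transpose_nonsing_inv, hSsymm.eq]
  have hJ : Jmat (stepMinus U S⁻¹ γ ε) z
      = LinearMap.toMatrix (phaseBasis d) (phaseBasis d) (Ltot U S⁻¹ γ ε z).toLinearMap := by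
    rw [Jmat, (stepMinus_hasFDerivAt U S⁻¹ γ ε hU z).fderiv]
  set L' := (Ltot U S⁻¹ γ ε z).toLinearMap with hL'
  have hb : (omL d).compl₁₂ L' L' = Real.exp (-(γ * ε)) • omL d := by
    refine LinearMap.ext fun u => LinearMap.ext fun v => ?_
    simp only [LinearMap.compl₁₂_apply, LinearMap.smul_apply, smul_eq_mul, hL',
      ContinuousLinearMap.coe_coe]
    exact om_Ltot U S⁻¹ γ ε hU hSinv z u v
  rw [hJ, ← toMatrix₂_omL, ← LinearMap.toMatrix₂_compl₁₂, hb, _root_.map_smul, toMatrix₂_omL]
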